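/- Let g : [0,∞) → ℝ be twice continuously differentiable with g(0) = 0, g' > 0 on [0,∞), and suppose there is x* > 0 with g'' < 0 on (0, x*) and g'' > 0 on (x*, ∞), and g'(x) → ∞ as x → ∞. Then the equation g'(x̄)·x̄ - g(x̄) = 0 has exactly one solution x̄ in (0, ∞), and this solution satisfies x̄ > x*. -/

import Mathlib

theorem stmt6 (g : ℝ → ℝ) (xstar : ℝ)
    (hC2 : ContDiffOn ℝ 2 g (Set.Ici 0))
    (h0 : g 0 = 0) (hd : ∀ x : ℝ, 0 ≤ x → 0 < deriv g x)
    (hxs : 0 < xstar)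
    (hconc : ∀ x ∈ Set.Ioo 0 xstar, deriv (deriv g) x < 0)
    (hconv : ∀ x : ℝ, xstar < x → 0 < deriv (deriv g) x)
    (hinf : Filter.Tendsto (deriv g) Filter.atTop Filter.atTop) :
    ∃ xb : ℝ, xstar < xb ∧ deriv g xb * xb - g xb = 0 ∧
      ∀ y : ℝ, 0 < y → deriv g y * y - g y = 0 → y = xb := by
  set F : ℝ → ℝ := fun x => deriv g x * x - g x with hF
  -- C^1 of deriv g on Ioi 0
  have hC2' : ContDiffOn ℝ 2 g (Set.Ioi 0) := hC2.mono Set.Ioi_subset_Ici_self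
  have hC1d : ContDiffOn ℝ 1 (deriv g) (Set.Ioi 0) :=
    hC2'.deriv_of_isOpen isOpen_Ioi (by norm_num)
  have hgdiff : ∀ x : ℝ, 0 < x → DifferentiableAt ℝ g x := by
    intro x hx
    exact (hC2'.differentiableOn (by norm_num)).differentiableAt
      (isOpen_Ioi.mem_nhds hx)
  have hgddiff : ∀ x : ℝ, 0 < x → DifferentiableAt ℝ (deriv g) x := by
    intro x hx
    exact (hC1d.differentiableOn one_ne_zero).differentiableAt (isOpen_Ioi.mem_nhds hx)
  have hFderiv : ∀ x : ℝ, 0 < x → HasDerivAt F (deriv (deriv g) x * x) x := by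
    intro x hx
    have h1 : HasDerivAt g (deriv g x) x := (hgdiff x hx).hasDerivAt
    have h2 : HasDerivAt (deriv g) (deriv (deriv g) x) x := (hgddiff x hx).hasDerivAt
    have h3 : HasDerivAt (fun y => deriv g y * y)
        (deriv (deriv g) x * x + deriv g x * 1) x := h2.mul (hasDerivAt_id x)
    have h4 := h3.sub h1
    convert h4 using 1
    · rfl
    · rfl
    · rfl
    ring
  have hFderiv' : ∀ x : ℝ, 0 < x → deriv F x = deriv (deriv g) x * x := by
    intro x hx; exact (hFderiv x hx).deriv
  have hF0 : F 0 = 0 := by simp [hF, h0]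
  -- continuity of F on Ici 0 via derivWithin
  have hFw : Set.EqOn F (fun x => derivWithin g (Set.Ici 0) x * x - g x) (Set.Ici 0) := by
    intro x hx
    rcases eq_or_lt_of_le (Set.mem_Ici.mp hx) with h | h
    · simp [hF, ← h]
    · have : derivWithin g (Set.Ici 0) x = deriv g x := by
        apply derivWithin_of_mem_nhds
        exact Filter.mem_of_superset (isOpen_Ioi.mem_nhds h) Set.Ioi_subset_Ici_self
      simp [hF, this]
  have hFcont : ContinuousOn F (Set.Ici 0) := by
    apply ContinuousOn.congr _ hFw
    exact ((hC2.continuousOn_derivWithin (uniqueDiffOn_Ici 0) one_le_two).mul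
      continuousOn_id).sub hC2.continuousOn
  -- F strictly decreasing on [0, xstar]
  have hanti : StrictAntiOn F (Set.Icc 0 xstar) := by
    apply strictAntiOn_of_deriv_neg (convex_Icc 0 xstar)
      (hFcont.mono (Set.Icc_subset_Ici_self))
    intro x hx
    rw [interior_Icc] at hx
    rw [hFderiv' x hx.1]
    exact mul_neg_of_neg_of_pos (hconc x hx) hx.1
  -- F strictly increasing on [xstar, ∞)
  have hmono : StrictMonoOn F (Set.Ici xstar) := by
    apply strictMonoOn_of_deriv_pos (convex_Ici xstar)
      (hFcont.mono (Set.Ici_subset_Ici.2 hxs.le))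
    intro x hx
    rw [interior_Ici] at hx
    rw [hFderiv' x (hxs.trans hx)]
    exact mul_pos (hconv x hx) (hxs.trans hx)
  have hFxs : F xstar < 0 := by
    have := hanti (Set.left_mem_Icc.2 hxs.le) (Set.right_mem_Icc.2 hxs.le) hxs
    rwa [hF0] at this
  -- H monotone: F x - xstar * deriv g x
  have hHmono : MonotoneOn (fun x => F x - xstar * deriv g x) (Set.Ici xstar) := by
    apply monotoneOn_of_deriv_nonneg (convex_Ici xstar)
    · exact (hFcont.mono (Set.Ici_subset_Ici.2 hxs.le)).sub
        (continuousOn_const.mul (hC1d.continuousOn.mono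
          (fun y hy => hxs.trans_le hy)))
    · intro x hx
      rw [interior_Ici] at hx
      exact ((hFderiv x (hxs.trans hx)).sub
        (((hgddiff x (hxs.trans hx)).hasDerivAt).const_mul xstar)).differentiableAt.differentiableWithinAt
    · intro x hx
      rw [interior_Ici] at hx
      have hx0 : 0 < x := hxs.trans hx
      have hD : HasDerivAt (fun x => F x - xstar * deriv g x)
          (deriv (deriv g) x * x - xstar * deriv (deriv g) x) x :=
        (hFderiv x hx0).sub (((hgddiff x hx0).hasDerivAt).const_mul xstar)
      rw [hD.deriv]
      have h1 := hconv x hx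
      have h2 : xstar < x := hx
      nlinarith
  -- F tends to atTop
  have hFtop : Filter.Tendsto F Filter.atTop Filter.atTop := by
    have hlin : Filter.Tendsto (fun x => xstar * deriv g x +
        (F xstar - xstar * deriv g xstar)) Filter.atTop Filter.atTop :=
      (hinf.const_mul_atTop hxs).atTop_add tendsto_const_nhds
    apply Filter.tendsto_atTop_mono' _ _ hlin
    filter_upwards [Filter.eventually_ge_atTop xstar] with x hx
    have := hHmono (Set.self_mem_Ici) (by exact hx) hx
    simp only at this
    linarith
  -- find M with F M > 0
  obtain ⟨M, hFM, hxsM⟩ :=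
    ((hFtop.eventually_gt_atTop 0).and (Filter.eventually_ge_atTop xstar)).exists
  -- IVT on [xstar, M]
  have hcontIcc : ContinuousOn F (Set.Icc xstar M) :=
    hFcont.mono (fun y hy => hxs.le.trans hy.1)
  have hmem : (0:ℝ) ∈ Set.Ioo (F xstar) (F M) := ⟨hFxs, hFM⟩
  obtain ⟨xb, hxb, hxbF⟩ := intermediate_value_Ioo hxsM hcontIcc hmem
  refine ⟨xb, hxb.1, hxbF, ?_⟩
  intro y hy hyF
  have hyxs : xstar < y := by
    by_contra h
    push_neg at h
    have : F y < 0 := by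
      have := hanti (Set.left_mem_Icc.2 hxs.le) (Set.mem_Icc.2 ⟨hy.le, h⟩) hy
      rwa [hF0] at this
    rw [hF] at this
    simp only at this
    linarith [hyF]
  have hyI : y ∈ Set.Ici xstar := hyxs.le
  have hxbI : xb ∈ Set.Ici xstar := hxb.1.le
  have : F y = F xb := by rw [hxbF]; exact hyF
  exact hmono.injOn hyI hxbI this
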